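/- (Theorem 3) Bounds on the TSc efficiency: let (v, u, w) be TSc-primal-feasible with goal price τ, suppose there exists a TSc-dual-feasible triple (π, Q, P) with scalar κ, let ω := κ·w and γ ∈ ℝ, and define the affected virtual input α := ∑_{i∈I} v i · X i o + (1 − γ)·ω and the affected virtual output β := ∑_{r∈R} u r · Y r o − γ·ω. If α = 1 and β > 0, then 0 < β ≤ 1; consequently the TSc efficiency E := β/α satisfies 0 < E ≤ 1 and the TSc inefficiency F := (α − β)/α satisfies F = 1 − E and 0 ≤ F < 1. -/
import Mathlib


open Finset

/-- A triple `(π, Q, P)` is TSc-dual-feasible with scalar `κ`. -/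
def TScDualFeasible {I R J : Type*} [Fintype I] [Fintype R] [Fintype J]
    (X : I → J → ℝ) (Y : R → J → ℝ) (o : J) (κ : ℝ)
    (π : J → ℝ) (Q : I → ℝ) (P : R → ℝ) : Prop :=
  (∀ j, 0 ≤ π j) ∧ (∀ i, 0 ≤ Q i) ∧ (∀ r, 0 ≤ P r) ∧
  (∀ i, (∑ j, X i j * π j) + Q i * X i o = X i o) ∧
  (∀ r, -(∑ j, Y r j * π j) + P r * Y r o = -(Y r o)) ∧
  (∑ j, π j = κ)

/-- A triple `(v, u, w)` is TSc-primal-feasible with goal price `τ`. -/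
def TScPrimalFeasible {I R J : Type*} [Fintype I] [Fintype R] [Fintype J]
    (X : I → J → ℝ) (Y : R → J → ℝ) (o : J) (τ : ℝ)
    (v : I → ℝ) (u : R → ℝ) (w : ℝ) : Prop :=
  (∀ j, 0 ≤ (∑ i, v i * X i j) - (∑ r, u r * Y r j) + w) ∧
  (∀ i, τ ≤ X i o * v i) ∧ (∀ r, τ ≤ Y r o * u r)

/-- (Theorem 3) Bounds on the TSc efficiency. -/
theorem tsc_efficiency_bounds
    {I R J : Type*} [Fintype I] [Fintype R] [Fintype J]
    [Nonempty I] [Nonempty R] [Nonempty J]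
    (X : I → J → ℝ) (Y : R → J → ℝ)
    (hX : ∀ i j, 0 < X i j) (hY : ∀ r j, 0 < Y r j)
    (o : J) (τ : ℝ) (hτ : 0 < τ) (κ : ℝ)
    (v : I → ℝ) (u : R → ℝ) (w : ℝ)
    (hprimal : TScPrimalFeasible X Y o τ v u w)
    (hdual : ∃ (π : J → ℝ) (Q : I → ℝ) (P : R → ℝ),
      TScDualFeasible X Y o κ π Q P)
    (ω γ α β : ℝ)
    (hω : ω = κ * w)
    (hα : α = (∑ i, v i * X i o) + (1 - γ) * ω)
    (hβ : β = (∑ r, u r * Y r o) - γ * ω)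
    (hα1 : α = 1) (hβpos : 0 < β) :
    (0 < β) ∧ (β ≤ 1) ∧
    (0 < β / α) ∧ (β / α ≤ 1) ∧
    ((α - β) / α = 1 - β / α) ∧
    (0 ≤ (α - β) / α) ∧ ((α - β) / α < 1) := by
  obtain ⟨π, Qd, Pd, hπ, hQ, hP, hXc, hYc, hκ⟩ := hdual
  obtain ⟨hfeas, hv, hu⟩ := hprimal
  have hvpos : ∀ i, 0 < v i := fun i => by nlinarith [hv i, hX i o, hτ]
  have hupos : ∀ r, 0 < u r := fun r => by nlinarith [hu r, hY r o, hτ]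
  have hS : 0 ≤ ∑ j, π j * ((∑ i, v i * X i j) - (∑ r, u r * Y r j) + w) :=
    Finset.sum_nonneg fun j _ => mul_nonneg (hπ j) (hfeas j)
  have hS' : (∑ j, π j * ((∑ i, v i * X i j) - (∑ r, u r * Y r j) + w))
      = (∑ i, v i * (∑ j, X i j * π j)) - (∑ r, u r * (∑ j, Y r j * π j)) + κ * w := by
    rw [← hκ]
    simp only [mul_sub, mul_add, Finset.sum_sub_distrib, Finset.sum_add_distrib,
      Finset.mul_sum, Finset.sum_mul]
    rw [Finset.sum_comm (f := fun j i => π j * (v i * X i j)),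
      Finset.sum_comm (f := fun j r => π j * (u r * Y r j))]
    congr 1
    congr 1
    · exact Finset.sum_congr rfl fun i _ =>
        Finset.sum_congr rfl fun j _ => by ring
    · exact Finset.sum_congr rfl fun r _ =>
        Finset.sum_congr rfl fun j _ => by ring
  have e1 : ∀ i, (∑ j, X i j * π j) = X i o - Qd i * X i o := fun i => by linarith [hXc i]
  have e2 : ∀ r, (∑ j, Y r j * π j) = Y r o + Pd r * Y r o := fun r => by linarith [hYc r]
  have hQX : 0 ≤ ∑ i, v i * (Qd i * X i o) :=
    Finset.sum_nonneg fun i _ => mul_nonneg (hvpos i).le (mul_nonneg (hQ i) (hX i o).le)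
  have hPY : 0 ≤ ∑ r, u r * (Pd r * Y r o) :=
    Finset.sum_nonneg fun r _ => mul_nonneg (hupos r).le (mul_nonneg (hP r) (hY r o).le)
  have key : 0 ≤ α - β := by
    have : (∑ j, π j * ((∑ i, v i * X i j) - (∑ r, u r * Y r j) + w))
        = (α - β) - (∑ i, v i * (Qd i * X i o)) - (∑ r, u r * (Pd r * Y r o)) := by
      rw [hS']
      simp only [fun i => e1 i, fun r => e2 r, mul_sub, mul_add,
        Finset.sum_sub_distrib, Finset.sum_add_distrib]
      rw [hα, hβ, hω]; ring
    linarith [hS, this ▸ hS]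
  have hβ1 : β ≤ 1 := by linarith
  subst hα1
  refine ⟨hβpos, hβ1, by simpa using hβpos, by simpa using hβ1, by norm_num, ?_, ?_⟩
  · simp; linarith
  · simp; linarith
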